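/- Define the shifted concatenation σ ∙ τ of permutations σ of size m and τ of size k as the permutation of size m+k whose first k values are τ(1)+m,...,τ(k)+m and whose last m values are σ(1),...,σ(m). Then ∙ is associative, the empty permutation is a two-sided identity, and if σ and τ are both up-down permutations of even sizes avoiding 1234, then σ ∙ τ is an up-down permutation avoiding 1234. -/

import Mathlib

/-- A list is (the one-line notation, 0-indexed values, of) a permutation of its
index set. -/
def IsPermList (l : List ℕ) : Prop :=
  l.Nodup ∧ ∀ x : ℕ, x ∈ l ↔ x < l.length

/-- Shifted concatenation: the values of `τ`, each shifted up by the size of `σ`, are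
placed first, followed by the values of `σ`. -/
def sc (σ τ : List ℕ) : List ℕ := (τ.map (· + σ.length)) ++ σ

/-- The list is up-down: ascent at each even 0-indexed position, descent at each odd
one. -/
def ListUpDown (l : List ℕ) : Prop :=
  ∀ i : ℕ, i + 1 < l.length →
    (i % 2 = 0 → l.getD i 0 < l.getD (i+1) 0) ∧
    (i % 2 = 1 → l.getD (i+1) 0 < l.getD i 0)

/-- The list avoids the pattern `1234`. -/
def ListAvoids1234 (l : List ℕ) : Prop :=
  ¬ ∃ a b c d : ℕ, a < b ∧ b < c ∧ c < d ∧ d < l.length ∧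
      l.getD a 0 < l.getD b 0 ∧ l.getD b 0 < l.getD c 0 ∧ l.getD c 0 < l.getD d 0

lemma sc_length (σ τ : List ℕ) : (sc σ τ).length = τ.length + σ.length := by
  simp [sc]

lemma sc_getD_left (σ τ : List ℕ) {i : ℕ} (h : i < τ.length) :
    (sc σ τ).getD i 0 = τ.getD i 0 + σ.length := by
  have h1 : i < (sc σ τ).length := by rw [sc_length]; omega
  have h2 : i < (τ.map (· + σ.length)).length := by simpa using h
  rw [List.getD_eq_getElem _ _ h1, List.getD_eq_getElem _ _ h]
  simp [sc, List.getElem_append_left h2]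

lemma sc_getD_right (σ τ : List ℕ) {i : ℕ} (h1 : τ.length ≤ i)
    (h2 : i < τ.length + σ.length) :
    (sc σ τ).getD i 0 = σ.getD (i - τ.length) 0 := by
  have h3 : i < (sc σ τ).length := by rw [sc_length]; omega
  have h4 : i - τ.length < σ.length := by omega
  have h5 : (τ.map (· + σ.length)).length ≤ i := by simpa using h1
  rw [List.getD_eq_getElem _ _ h3, List.getD_eq_getElem _ _ h4]
  simp [sc, List.getElem_append_right h5]

lemma getD_mem {l : List ℕ} {i : ℕ} (h : i < l.length) : l.getD i 0 ∈ l := by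
  rw [List.getD_eq_getElem _ _ h]; exact List.getElem_mem h

/-- Shifted concatenation is associative, has the empty permutation as a two-sided
identity, and preserves the class of even-size up-down permutations avoiding `1234`. -/
theorem sc_monoid_and_closure :
    (∀ σ τ υ : List ℕ, sc (sc σ τ) υ = sc σ (sc τ υ)) ∧
    (∀ σ : List ℕ, sc σ [] = σ ∧ sc [] σ = σ) ∧
    (∀ σ τ : List ℕ, IsPermList σ → IsPermList τ →
      Even σ.length → Even τ.length →
      ListUpDown σ → ListAvoids1234 σ → ListUpDown τ → ListAvoids1234 τ →
      IsPermList (sc σ τ) ∧ ListUpDown (sc σ τ) ∧ ListAvoids1234 (sc σ τ)) := by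
  refine ⟨?_, ?_, ?_⟩
  · intro σ τ υ
    simp [sc, List.map_map, Function.comp, add_assoc]
  · intro σ
    constructor <;> simp [sc]
  · intro σ τ hσp hτp hσe hτe hσu hσa hτu hτa
    obtain ⟨hσnd, hσmem⟩ := hσp
    obtain ⟨hτnd, hτmem⟩ := hτp
    have hσlt : ∀ {i : ℕ}, i < σ.length → σ.getD i 0 < σ.length := fun h =>
      (hσmem _).1 (getD_mem h)
    have hlen : (sc σ τ).length = τ.length + σ.length := sc_length σ τ
    refine ⟨⟨?_, ?_⟩, ?_, ?_⟩
    · -- Nodup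
      rw [sc, List.nodup_append]
      refine ⟨hτnd.map fun a b h => by omega, hσnd, ?_⟩
      intro x hx y hx' hxy
      obtain ⟨t, _, rfl⟩ := List.mem_map.1 hx
      have := (hσmem _).1 hx'
      omega
    · -- membership
      intro x
      rw [hlen, sc, List.mem_append, List.mem_map]
      constructor
      · rintro (⟨t, ht, rfl⟩ | hx)
        · have := (hτmem t).1 ht; omega
        · have := (hσmem x).1 hx; omega
      · intro hx
        rcases lt_or_ge x σ.length with h | h
        · exact Or.inr ((hσmem x).2 h)
        · exact Or.inl ⟨x - σ.length, (hτmem _).2 (by omega), by omega⟩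
    · -- up-down
      intro i hi
      rw [hlen] at hi
      rcases lt_or_ge (i + 1) τ.length with h1 | h1
      · rw [sc_getD_left σ τ (by omega), sc_getD_left σ τ h1]
        have := hτu i (by omega)
        refine ⟨fun hp => ?_, fun hp => ?_⟩
        · have := this.1 hp; omega
        · have := this.2 hp; omega
      · rcases eq_or_lt_of_le h1 with h2 | h2
        · -- i + 1 = τ.length, boundary; τ.length even so i is odd
          obtain ⟨e, he⟩ := hτe
          have hiodd : i % 2 = 1 := by omega
          rw [sc_getD_left σ τ (by omega), sc_getD_right σ τ (by omega) (by omega)]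
          refine ⟨fun h => by omega, fun _ => ?_⟩
          have : σ.getD (i + 1 - τ.length) 0 < σ.length := hσlt (by omega)
          omega
        · -- both in σ part
          rw [sc_getD_right σ τ (by omega) (by omega),
            sc_getD_right σ τ (by omega) (by omega)]
          have hstep : i + 1 - τ.length = (i - τ.length) + 1 := by omega
          have := hσu (i - τ.length) (by omega)
          obtain ⟨e, he⟩ := hτe
          have hpar : (i - τ.length) % 2 = i % 2 := by omega
          rw [hstep]
          constructor <;> intro hp
          · exact this.1 (by omega)
          · exact this.2 (by omega)
    · -- avoids 1234
      rintro ⟨a, b, c, d, hab, hbc, hcd, hd, h1, h2, h3⟩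
      rw [hlen] at hd
      -- a value in the left block is ≥ σ.length, in the right block < σ.length
      have key : ∀ x y : ℕ, x < τ.length → τ.length ≤ y → y < τ.length + σ.length →
          ¬ (sc σ τ).getD x 0 < (sc σ τ).getD y 0 := by
        intro x y hx hy hy' hlt
        rw [sc_getD_left σ τ hx, sc_getD_right σ τ hy (by omega)] at hlt
        have := hσlt (show y - τ.length < σ.length by omega)
        omega
      rcases lt_or_ge d τ.length with hdk | hdk
      · -- all in τ block
        refine hτa ⟨a, b, c, d, hab, hbc, hcd, hdk, ?_, ?_, ?_⟩ <;>
        · rw [sc_getD_left σ τ (by omega), sc_getD_left σ τ (by omega)] at h1 h2 h3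
          omega
      rcases lt_or_ge a τ.length with hak | hak
      · -- chain crosses the boundary
        rcases lt_or_ge b τ.length with hbk | hbk
        · rcases lt_or_ge c τ.length with hck | hck
          · exact key c d hck hdk (by omega) h3
          · exact key b c hbk hck (by omega) h2
        · exact key a b hak hbk (by omega) h1
      · -- all in σ block
        rw [sc_getD_right σ τ (by omega) (by omega),
          sc_getD_right σ τ (by omega) (by omega)] at h1
        rw [sc_getD_right σ τ (by omega) (by omega),
          sc_getD_right σ τ (by omega) (by omega)] at h2
        rw [sc_getD_right σ τ (by omega) (by omega),
          sc_getD_right σ τ (by omega) (by omega)] at h3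
        exact hσa ⟨a - τ.length, b - τ.length, c - τ.length, d - τ.length,
          by omega, by omega, by omega, by omega, h1, h2, h3⟩
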